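/- arXiv:1606.06913 — 2 statements merged into one kernel-verified Lean document; each statement's English description precedes it below -/
import Mathlib

section
/- For an n-dimensional lattice Λ, define η̃ = max over r>0 of √(log|Λ* ∩ rB₂ⁿ| / π) / r, where Λ* is the dual lattice and B₂ⁿ the unit ball. Let η(Λ) be the unique s>0 with Σ_{y∈Λ*\{0}} exp(−π‖sy‖²) = 1/2. Then η(Λ)/√3 ≤ η̃ ≤ η(Λ). -/
open Real Matrix

/-- Euclidean norm on `Fin n → ℝ`. -/
noncomputable def enormFin {n : ℕ} (x : Fin n → ℝ) : ℝ := Real.sqrt (∑ i, x i ^ 2)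

/-- The dual lattice point of `Λ* = B⁻ᵀ·ℤⁿ` corresponding to `z`. -/
noncomputable def dualPt {n : ℕ} (B : Matrix (Fin n) (Fin n) ℝ) (z : Fin n → ℤ) : Fin n → ℝ :=
  (B⁻¹)ᵀ.mulVec fun i => (z i : ℝ)

/-- `η̃ = max_{r>0} √(log|Λ* ∩ rB₂ⁿ|/π)/r` for the lattice `Λ = B·ℤⁿ`. -/
noncomputable def etaTilde {n : ℕ} (B : Matrix (Fin n) (Fin n) ℝ) : ℝ :=
  ⨆ r : {r : ℝ // 0 < r},
    Real.sqrt (Real.log (Nat.card {z : Fin n → ℤ // enormFin (dualPt B z) ≤ r.1} : ℝ) / π) / r.1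

section Aux
variable {n : ℕ} (B : Matrix (Fin n) (Fin n) ℝ)

/-- Auxiliary: squared norm of the dual lattice point. -/
noncomputable def sqn (z : Fin n → ℤ) : ℝ := ∑ i, dualPt B z i ^ 2

lemma sqn_nonneg (z : Fin n → ℤ) : 0 ≤ sqn B z :=
  Finset.sum_nonneg fun _ _ => sq_nonneg _

lemma enorm_dualPt (z : Fin n → ℤ) : enormFin (dualPt B z) = Real.sqrt (sqn B z) := rfl

lemma enorm_le_iff {r : ℝ} (hr : 0 ≤ r) (z : Fin n → ℤ) :
    enormFin (dualPt B z) ≤ r ↔ sqn B z ≤ r ^ 2 := by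
  rw [enorm_dualPt, Real.sqrt_le_iff]
  exact and_iff_right hr

lemma dualPt_zero : dualPt B (0 : Fin n → ℤ) = 0 := by
  have h : (fun i => (((0 : Fin n → ℤ)) i : ℝ)) = (0 : Fin n → ℝ) := by
    funext i; simp
  show (B⁻¹)ᵀ.mulVec (fun i => (((0 : Fin n → ℤ)) i : ℝ)) = 0
  rw [h, Matrix.mulVec_zero]

lemma enorm_zero' : enormFin (0 : Fin n → ℝ) = 0 := by
  simp [enormFin]

lemma dualPt_eq_zero (hB : IsUnit B.det) {z : Fin n → ℤ} (h : dualPt B z = 0) : z = 0 := by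
  have h2 : Bᵀ.mulVec (dualPt B z) = fun i => (z i : ℝ) := by
    unfold dualPt
    rw [Matrix.mulVec_mulVec, ← Matrix.transpose_mul, Matrix.nonsing_inv_mul B hB,
      Matrix.transpose_one, Matrix.one_mulVec]
  rw [h, Matrix.mulVec_zero] at h2
  funext i
  have h3 := congrFun h2.symm i
  have h4 : ((z i : ℝ)) = 0 := by simpa using h3
  exact_mod_cast h4

lemma sqn_pos (hB : IsUnit B.det) {z : Fin n → ℤ} (hz : z ≠ 0) : 0 < sqn B z := by
  rcases (sqn_nonneg B z).lt_or_eq with h | h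
  · exact h
  · exfalso
    apply hz
    apply dualPt_eq_zero B hB
    funext i
    have h0 := h.symm
    rw [sqn] at h0
    have h5 := (Finset.sum_eq_zero_iff_of_nonneg
      (fun i _ => sq_nonneg (dualPt B z i))).mp h0 i (Finset.mem_univ i)
    exact pow_eq_zero_iff two_ne_zero |>.mp h5

end Aux

set_option maxHeartbeats 2000000 in
/-- If `s > 0` is the smoothing parameter of `Λ` (i.e. `Σ_{y∈Λ*\0} exp(−π‖sy‖²) = 1/2`),
then `s/√3 ≤ η̃ ≤ s`. -/
theorem stmt5 {n : ℕ} (B : Matrix (Fin n) (Fin n) ℝ) (hB : IsUnit B.det)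
    (s : ℝ) (hs : 0 < s)
    (hsum : (∑' z : {z : Fin n → ℤ // z ≠ 0},
        Real.exp (-π * s ^ 2 * ∑ i, dualPt B z.1 i ^ 2)) = 1 / 2) :
    s / Real.sqrt 3 ≤ etaTilde B ∧ etaTilde B ≤ s := by
  classical
  haveI hne : Nonempty {r : ℝ // 0 < r} := ⟨⟨1, one_pos⟩⟩
  set f : {z : Fin n → ℤ // z ≠ 0} → ℝ :=
    fun z => Real.exp (-π * s ^ 2 * ∑ i, dualPt B z.1 i ^ 2) with hfdef
  have hfsqn : ∀ z, f z = Real.exp (-π * s ^ 2 * sqn B z.1) := fun z => rfl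
  have hsum' : ∑' z, f z = 1 / 2 := hsum
  have hsummable : Summable f := by
    by_contra h
    rw [tsum_eq_zero_of_not_summable h] at hsum'
    norm_num at hsum'
  have hfpos : ∀ z, 0 < f z := fun z => Real.exp_pos _
  have hπ : (0:ℝ) < π := Real.pi_pos
  -- finiteness of the balls
  have hfin : ∀ r : ℝ, {z : Fin n → ℤ | enormFin (dualPt B z) ≤ r}.Finite := by
    intro r
    set r' := max r 0 with hr'def
    have hr0 : 0 ≤ r' := le_max_right _ _
    have hev : ∀ᶠ w in Filter.cofinite, f w < Real.exp (-π * s ^ 2 * r' ^ 2) :=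
      hsummable.tendsto_cofinite_zero.eventually_lt_const (Real.exp_pos _)
    rw [Filter.eventually_cofinite] at hev
    have hsub : {z : Fin n → ℤ | enormFin (dualPt B z) ≤ r} ⊆
        insert 0 (Subtype.val '' {w : {z : Fin n → ℤ // z ≠ 0} |
          ¬ f w < Real.exp (-π * s ^ 2 * r' ^ 2)}) := by
      intro z hz
      by_cases h0 : z = 0
      · exact Set.mem_insert_iff.2 (Or.inl h0)
      · refine Set.mem_insert_of_mem _ ⟨⟨z, h0⟩, ?_, rfl⟩
        simp only [Set.mem_setOf_eq, not_lt]
        rw [hfsqn]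
        apply Real.exp_le_exp.2
        have hq : sqn B z ≤ r' ^ 2 :=
          (enorm_le_iff B hr0 z).1 (le_trans hz (le_max_left _ _))
        have hps : (0:ℝ) ≤ π * s ^ 2 := by positivity
        nlinarith
    exact ((hev.image _).insert 0).subset hsub
  have hNcard : ∀ r : ℝ, (Nat.card {z : Fin n → ℤ // enormFin (dualPt B z) ≤ r}) =
      {z : Fin n → ℤ | enormFin (dualPt B z) ≤ r}.ncard :=
    fun r => Nat.card_coe_set_eq _
  -- 0 is in every ball of nonnegative radius
  have h0mem : ∀ r : ℝ, 0 ≤ r → (0 : Fin n → ℤ) ∈ {z : Fin n → ℤ | enormFin (dualPt B z) ≤ r} := by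
    intro r hr
    simp only [Set.mem_setOf_eq, dualPt_zero, enorm_zero']
    exact hr
  -- the f-values of points in a ball are at least exp (-π s² r²)
  have hfge : ∀ (r : ℝ), 0 ≤ r → ∀ w : {z : Fin n → ℤ // z ≠ 0},
      enormFin (dualPt B w.1) ≤ r → Real.exp (-π * s ^ 2 * r ^ 2) ≤ f w := by
    intro r hr w hw
    rw [hfsqn]
    apply Real.exp_le_exp.2
    have hq : sqn B w.1 ≤ r ^ 2 := (enorm_le_iff B hr w.1).1 hw
    have hps : (0:ℝ) ≤ π * s ^ 2 := by positivity
    nlinarith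
  -- upper bound per term
  have key_up : ∀ r : ℝ, 0 < r →
      Real.sqrt (Real.log (Nat.card {z : Fin n → ℤ // enormFin (dualPt B z) ≤ r} : ℝ) / π) / r
        ≤ s := by
    intro r hr
    set N := Nat.card {z : Fin n → ℤ // enormFin (dualPt B z) ≤ r} with hN
    rcases le_or_gt N 1 with h1 | h2
    · have : Real.log (N : ℝ) = 0 := by
        interval_cases N
        · simp
        · simp
      rw [this]
      simp only [zero_div, Real.sqrt_zero]
      positivity
    · -- N ≥ 2
      have hS := hfin r
      have hpre : (Subtype.val ⁻¹' {z : Fin n → ℤ | enormFin (dualPt B z) ≤ r} :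
          Set {z : Fin n → ℤ // z ≠ 0}).Finite := hS.preimage Subtype.val_injective.injOn
      set T := hpre.toFinset with hT
      -- N ≤ T.card + 1
      have hcard : N ≤ T.card + 1 := by
        have hsub : {z : Fin n → ℤ | enormFin (dualPt B z) ≤ r} ⊆
            insert 0 (Subtype.val '' (Subtype.val ⁻¹'
              {z : Fin n → ℤ | enormFin (dualPt B z) ≤ r} : Set {z : Fin n → ℤ // z ≠ 0})) := by
          intro z hz
          by_cases h0 : z = 0
          · exact Set.mem_insert_iff.2 (Or.inl h0)
          · exact Set.mem_insert_of_mem _ ⟨⟨z, h0⟩, hz, rfl⟩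
        calc N = {z : Fin n → ℤ | enormFin (dualPt B z) ≤ r}.ncard := hNcard r
          _ ≤ (insert 0 (Subtype.val '' (Subtype.val ⁻¹'
              {z : Fin n → ℤ | enormFin (dualPt B z) ≤ r} :
                Set {z : Fin n → ℤ // z ≠ 0}))).ncard :=
            Set.ncard_le_ncard hsub ((hpre.image _).insert 0)
          _ ≤ (Subtype.val '' (Subtype.val ⁻¹'
              {z : Fin n → ℤ | enormFin (dualPt B z) ≤ r} :
                Set {z : Fin n → ℤ // z ≠ 0})).ncard + 1 :=
            Set.ncard_insert_le _ _
          _ = (Subtype.val ⁻¹' {z : Fin n → ℤ | enormFin (dualPt B z) ≤ r} :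
              Set {z : Fin n → ℤ // z ≠ 0}).ncard + 1 := by
            rw [Set.ncard_image_of_injective _ Subtype.val_injective]
          _ = T.card + 1 := by rw [hT, Set.ncard_eq_toFinset_card _ hpre]
      -- sum over T bounds
      have hsumT : (T.card : ℝ) * Real.exp (-π * s ^ 2 * r ^ 2) ≤ 1 / 2 := by
        have h1' : ∀ w ∈ T, Real.exp (-π * s ^ 2 * r ^ 2) ≤ f w := by
          intro w hw
          apply hfge r hr.le
          have := hpre.mem_toFinset.1 hw
          exact this
        calc (T.card : ℝ) * Real.exp (-π * s ^ 2 * r ^ 2)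
            = T.card • Real.exp (-π * s ^ 2 * r ^ 2) := by
              rw [nsmul_eq_mul]
          _ ≤ ∑ w ∈ T, f w := Finset.card_nsmul_le_sum T f _ h1'
          _ ≤ ∑' w, f w := Summable.sum_le_tsum T (fun w _ => (hfpos w).le) hsummable
          _ = 1 / 2 := hsum'
      -- conclude N ≤ exp (π s² r²)
      set X := Real.exp (π * s ^ 2 * r ^ 2) with hX
      have hXval : Real.exp (-π * s ^ 2 * r ^ 2) = X⁻¹ := by
        rw [hX, ← Real.exp_neg]; ring_nf
      have hXpos : 0 < X := Real.exp_pos _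
      have hTN : (N : ℝ) - 1 ≤ (T.card : ℝ) := by
        have := hcard
        have : (N : ℝ) ≤ (T.card : ℝ) + 1 := by exact_mod_cast this
        linarith
      have hN1 : (1:ℝ) ≤ (N:ℝ) - 1 := by
        have : (2:ℝ) ≤ (N:ℝ) := by exact_mod_cast h2
        linarith
      have hE2 : X⁻¹ ≤ 1/2 := by
        rw [hXval] at hsumT
        nlinarith [hsumT, hTN, hN1, hXpos]
      have hX2 : (2:ℝ) ≤ X := by
        rw [inv_le_comm₀ hXpos (by norm_num)] at hE2
        simpa using hE2
      have hNX : (N : ℝ) ≤ X := by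
        rw [hXval] at hsumT
        have h3 : ((N:ℝ) - 1) * X⁻¹ ≤ 1/2 := by
          apply le_trans _ hsumT
          apply mul_le_mul_of_nonneg_right hTN (by positivity)
        have h4 : (N:ℝ) - 1 ≤ X/2 := by
          have hc := mul_le_mul_of_nonneg_right h3 hXpos.le
          rw [mul_assoc, inv_mul_cancel₀ hXpos.ne', mul_one] at hc
          linarith
        linarith
      have hlog : Real.log (N:ℝ) ≤ π * s ^ 2 * r ^ 2 := by
        calc Real.log (N:ℝ) ≤ Real.log X := Real.log_le_log (by positivity) hNX
          _ = π * s ^ 2 * r ^ 2 := Real.log_exp _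
      rw [div_le_iff₀ hr]
      rw [Real.sqrt_le_iff]
      constructor
      · positivity
      · rw [div_le_iff₀ hπ]
        nlinarith
  -- the supremum is bounded above
  have hBdd : BddAbove (Set.range fun r : {r : ℝ // 0 < r} =>
      Real.sqrt (Real.log (Nat.card {z : Fin n → ℤ // enormFin (dualPt B z) ≤ r.1} : ℝ) / π)
        / r.1) := by
    refine ⟨s, ?_⟩
    rintro x ⟨r, rfl⟩
    exact key_up r.1 r.2
  have hup : etaTilde B ≤ s := ciSup_le fun r => key_up r.1 r.2
  refine ⟨?_, hup⟩
  -- lower bound by contradiction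
  by_contra hlt
  push_neg at hlt
  -- notation
  set ord : (Fin n → ℤ) → ℝ := fun z => enormFin (dualPt B z) with hord
  set mB : (Fin n → ℤ) → ℕ := fun z => {w : Fin n → ℤ | ord w ≤ ord z}.ncard with hmB
  have hordnn : ∀ z, 0 ≤ ord z := fun z => Real.sqrt_nonneg _
  have hord0 : ord 0 = 0 := by rw [hord]; simp [dualPt_zero, enorm_zero']
  have hballfin : ∀ z : Fin n → ℤ, {w : Fin n → ℤ | ord w ≤ ord z}.Finite := fun z => hfin _
  have hmono : ∀ {z z' : Fin n → ℤ}, ord z' ≤ ord z → mB z' ≤ mB z := by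
    intro z z' h
    exact Set.ncard_le_ncard (fun w hw => le_trans hw h) (hballfin z)
  have hordmB : ∀ {z z' : Fin n → ℤ}, mB z' ≤ mB z → ord z' ≤ ord z := by
    intro z z' h
    by_contra hlt'
    push_neg at hlt'
    have hnotmem : z' ∉ {w : Fin n → ℤ | ord w ≤ ord z} := by
      simp only [Set.mem_setOf_eq, not_le]
      exact hlt'
    have hins : insert z' {w : Fin n → ℤ | ord w ≤ ord z} ⊆
        {w : Fin n → ℤ | ord w ≤ ord z'} := by
      intro x hx
      rcases hx with rfl | hx
      · exact Set.mem_setOf.2 (le_refl _)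
      · exact le_trans hx hlt'.le
    have hstep : mB z + 1 ≤ mB z' := by
      calc mB z + 1 = (insert z' {w : Fin n → ℤ | ord w ≤ ord z}).ncard :=
            (Set.ncard_insert_of_notMem hnotmem (hballfin z)).symm
        _ ≤ mB z' := Set.ncard_le_ncard hins (hballfin z')
    omega
  have hm2 : ∀ z : Fin n → ℤ, z ≠ 0 → 2 ≤ mB z := by
    intro z hz
    have h1 : 1 < mB z := by
      rw [hmB]
      rw [Set.one_lt_ncard_iff (hballfin z)]
      exact ⟨z, 0, Set.mem_setOf.2 (le_refl _),
        by simp only [Set.mem_setOf_eq, hord0]; exact hordnn z, hz⟩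
    omega
  -- pointwise bound
  have hbound : ∀ z : {z : Fin n → ℤ // z ≠ 0}, f z ≤ 1 / ((mB z.1 : ℝ)) ^ 3 := by
    rintro ⟨z, hz⟩
    have hr : 0 < ord z := Real.sqrt_pos.2 (sqn_pos B hB hz)
    have hterm : Real.sqrt (Real.log ((mB z : ℕ) : ℝ) / π) / ord z < s / Real.sqrt 3 := by
      refine lt_of_le_of_lt ?_ hlt
      have h := le_ciSup hBdd (⟨ord z, hr⟩ : {r : ℝ // 0 < r})
      rw [hNcard] at h
      exact h
    have h3 : (0:ℝ) < Real.sqrt 3 := by positivity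
    have hy : 0 < ord z * (s / Real.sqrt 3) := by positivity
    have h4 : Real.sqrt (Real.log ((mB z : ℕ) : ℝ) / π) < ord z * (s / Real.sqrt 3) := by
      rw [div_lt_iff₀ hr] at hterm
      linarith [hterm]
    have h5 : Real.log ((mB z : ℕ) : ℝ) / π < (ord z * (s / Real.sqrt 3)) ^ 2 :=
      (Real.sqrt_lt' hy).1 h4
    have hsq3 : (Real.sqrt 3) ^ 2 = 3 := Real.sq_sqrt (by norm_num)
    have h6 : 3 * Real.log ((mB z : ℕ) : ℝ) < π * s ^ 2 * (ord z) ^ 2 := by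
      rw [div_lt_iff₀ hπ] at h5
      have hexp : (ord z * (s / Real.sqrt 3)) ^ 2 = (ord z) ^ 2 * s ^ 2 / 3 := by
        rw [mul_pow, div_pow, hsq3]
        ring
      rw [hexp] at h5
      nlinarith
    have hsqn : sqn B z = (ord z) ^ 2 := (Real.sq_sqrt (sqn_nonneg B z)).symm
    have hm := hm2 z hz
    have hmpos : (0:ℝ) < ((mB z : ℕ) : ℝ) := by
      have : (2:ℝ) ≤ ((mB z : ℕ) : ℝ) := by exact_mod_cast hm
      linarith
    have hfz : f ⟨z, hz⟩ ≤ Real.exp (-(3 * Real.log ((mB z : ℕ) : ℝ))) := by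
      rw [hfsqn]
      apply Real.exp_le_exp.2
      rw [hsqn]
      nlinarith
    calc f ⟨z, hz⟩ ≤ Real.exp (-(3 * Real.log ((mB z : ℕ) : ℝ))) := hfz
      _ = 1 / ((mB z : ℕ) : ℝ) ^ 3 := by
        rw [Real.exp_neg]
        rw [show (3:ℝ) * Real.log ((mB z : ℕ) : ℝ) = ((3:ℕ):ℝ) * Real.log ((mB z : ℕ) : ℝ)
          by norm_num]
        rw [Real.exp_nat_mul, Real.exp_log hmpos, one_div]
  -- the counting injection
  set enc : (Fin n → ℤ) → ℕ := fun z => Encodable.encode z with henc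
  have hencinj : Function.Injective enc := Encodable.encode_injective
  set P : (Fin n → ℤ) → (Fin n → ℤ) → Prop :=
    fun z w => mB w < mB z ∨ (mB w = mB z ∧ enc w < enc z) with hP
  have hPmle : ∀ {z w}, P z w → mB w ≤ mB z := by
    rintro z w (h | ⟨h, _⟩)
    · exact h.le
    · exact h.le
  have hPirrefl : ∀ z, ¬ P z z := by
    rintro z (h | ⟨_, h⟩) <;> omega
  have hPtrans : ∀ {a b c}, P a b → P b c → P a c := by
    rintro a b c (h1 | ⟨h1, h1'⟩) (h2 | ⟨h2, h2'⟩)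
    · exact Or.inl (h2.trans h1)
    · exact Or.inl (h2 ▸ h1)
    · exact Or.inl (h1 ▸ h2)
    · exact Or.inr ⟨h2.trans h1, h2'.trans h1'⟩
  have hPtotal : ∀ {z w}, z ≠ w → P z w ∨ P w z := by
    intro z w hzw
    rcases lt_trichotomy (mB w) (mB z) with h | h | h
    · exact Or.inl (Or.inl h)
    · rcases lt_trichotomy (enc w) (enc z) with h' | h' | h'
      · exact Or.inl (Or.inr ⟨h, h'⟩)
      · exact absurd (hencinj h') (fun hh => hzw hh.symm)
      · exact Or.inr (Or.inr ⟨h.symm, h'⟩)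
    · exact Or.inr (Or.inl h)
  set Tset : (Fin n → ℤ) → Set (Fin n → ℤ) := fun z => {w | w ≠ 0 ∧ P z w} with hTset
  have hTsub : ∀ z, Tset z ⊆ {w : Fin n → ℤ | ord w ≤ ord z} :=
    fun z w hw => hordmB (hPmle hw.2)
  have hTfin : ∀ z, (Tset z).Finite := fun z => (hballfin z).subset (hTsub z)
  set c : (Fin n → ℤ) → ℕ := fun z => (Tset z).ncard with hc
  have hstep : ∀ {z w : Fin n → ℤ}, w ≠ 0 → P z w → c w < c z := by
    intro z w hw hPzw
    have hsub : insert w (Tset w) ⊆ Tset z := by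
      intro x hx
      rcases hx with rfl | hx
      · exact ⟨hw, hPzw⟩
      · exact ⟨hx.1, hPtrans hPzw hx.2⟩
    have hnm : w ∉ Tset w := fun hh => hPirrefl w hh.2
    have : c w + 1 ≤ c z := by
      calc c w + 1 = (insert w (Tset w)).ncard :=
            (Set.ncard_insert_of_notMem hnm (hTfin w)).symm
        _ ≤ c z := Set.ncard_le_ncard hsub (hTfin z)
    omega
  have hinj : Function.Injective (fun z : {z : Fin n → ℤ // z ≠ 0} => c z.1) := by
    intro a b hab
    by_contra hne'
    have hab' : a.1 ≠ b.1 := fun h => hne' (Subtype.ext h)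
    have hab2 : c a.1 = c b.1 := hab
    rcases hPtotal hab' with h | h
    · have := hstep b.2 h
      omega
    · have := hstep a.2 h
      omega
  have hcm : ∀ z : {z : Fin n → ℤ // z ≠ 0}, c z.1 + 2 ≤ mB z.1 := by
    rintro ⟨z, hz⟩
    show c z + 2 ≤ mB z
    have hSsub : {w : Fin n → ℤ | w ≠ 0 ∧ mB w ≤ mB z} ⊆
        {w : Fin n → ℤ | ord w ≤ ord z} \ {0} :=
      fun w hw => ⟨hordmB hw.2, hw.1⟩
    have h1 : insert z (Tset z) ⊆ {w : Fin n → ℤ | w ≠ 0 ∧ mB w ≤ mB z} := by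
      intro x hx
      rcases hx with rfl | hx
      · exact ⟨hz, le_refl _⟩
      · exact ⟨hx.1, hPmle hx.2⟩
    have hznm : z ∉ Tset z := fun hh => hPirrefl z hh.2
    have h2 : (insert z (Tset z)).ncard = c z + 1 :=
      Set.ncard_insert_of_notMem hznm (hTfin z)
    have h0m : (0 : Fin n → ℤ) ∈ {w : Fin n → ℤ | ord w ≤ ord z} := by
      simp only [Set.mem_setOf_eq, hord0]
      exact hordnn z
    have h3 : ({w : Fin n → ℤ | ord w ≤ ord z} \ {0}).ncard + 1 = mB z :=
      Set.ncard_diff_singleton_add_one h0m (hballfin z)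
    have h4 : (insert z (Tset z)).ncard ≤
        ({w : Fin n → ℤ | ord w ≤ ord z} \ {0}).ncard :=
      Set.ncard_le_ncard (h1.trans hSsub) ((hballfin z).diff)
    omega
  -- the comparison series
  set g : ℕ → ℝ := fun k => (1/4) * (1 / ((k:ℝ) + 1) - 1 / ((k:ℝ) + 2)) with hg
  have hgval : ∀ k : ℕ, g k = 1 / (4 * ((k:ℝ) + 1) * ((k:ℝ) + 2)) := by
    intro k
    rw [hg]
    have h1 : ((k:ℝ) + 1) ≠ 0 := by positivity
    have h2 : ((k:ℝ) + 2) ≠ 0 := by positivity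
    field_simp
    ring
  have hg_nonneg : ∀ k, 0 ≤ g k := by
    intro k
    rw [hgval]
    positivity
  have hgsummable : Summable g := by
    apply Summable.of_nonneg_of_le hg_nonneg (f := fun k : ℕ => 1 / ((k:ℝ) + 1) ^ 2)
    · intro k
      rw [hgval]
      apply one_div_le_one_div_of_le (by positivity)
      nlinarith [Nat.cast_nonneg (α := ℝ) k]
    · have h1 : Summable (fun k : ℕ => 1 / ((k:ℝ)) ^ 2) :=
        Real.summable_one_div_nat_pow.2 one_lt_two
      have := (summable_nat_add_iff 1).2 h1
      simpa using this
  have htsum_g : ∑' k, g k = 1/4 := by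
    have hhs := hgsummable.hasSum
    have hten := hhs.tendsto_sum_nat
    have hpartial : ∀ N : ℕ, ∑ k ∈ Finset.range N, g k = (1/4) * (1 - 1/((N:ℝ)+1)) := by
      intro N
      have heq : ∀ k ∈ Finset.range N, g k =
          (1/4) * ((fun j : ℕ => 1/((j:ℝ)+1)) k - (fun j : ℕ => 1/((j:ℝ)+1)) (k+1)) := by
        intro k _
        rw [hg]
        push_cast
        ring
      rw [Finset.sum_congr rfl heq, ← Finset.mul_sum,
        Finset.sum_range_sub' (fun j : ℕ => 1/((j:ℝ)+1))]
      norm_num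
    have hlim : Filter.Tendsto (fun N : ℕ => (1/4 : ℝ) * (1 - 1/((N:ℝ)+1)))
        Filter.atTop (nhds ((1/4) * (1 - 0))) := by
      apply Filter.Tendsto.const_mul
      apply Filter.Tendsto.const_sub
      exact tendsto_one_div_add_atTop_nhds_zero_nat
    rw [show (fun N : ℕ => ∑ k ∈ Finset.range N, g k) =
        (fun N : ℕ => (1/4 : ℝ) * (1 - 1/((N:ℝ)+1))) from funext hpartial] at hten
    have := tendsto_nhds_unique hten hlim
    rw [this]
    norm_num
  -- pointwise: f z ≤ g (c z)
  have hptwise : ∀ z : {z : Fin n → ℤ // z ≠ 0}, f z ≤ g (c z.1) := by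
    intro z
    have h1 := hbound z
    have h2 := hcm z
    have hm := hm2 z.1 z.2
    refine le_trans h1 ?_
    rw [hgval]
    apply one_div_le_one_div_of_le
    · positivity
    · -- 4 (c+1) (c+2) ≤ m³
      set M : ℝ := ((mB z.1 : ℕ) : ℝ) with hM
      set C : ℝ := ((c z.1 : ℕ) : ℝ) with hC
      have hMC : C + 2 ≤ M := by
        rw [hM, hC]
        exact_mod_cast h2
      have hM2 : (2:ℝ) ≤ M := by
        rw [hM]
        exact_mod_cast hm
      have hC0 : (0:ℝ) ≤ C := by rw [hC]; positivity
      nlinarith [sq_nonneg (M - 2), hMC, hM2, hC0]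
  -- final contradiction
  have hfinal : (1:ℝ)/2 ≤ 1/4 := by
    calc (1:ℝ)/2 = ∑' z, f z := hsum'.symm
      _ ≤ ∑' k, g k :=
        Summable.tsum_le_tsum_of_inj (fun z : {z : Fin n → ℤ // z ≠ 0} => c z.1) hinj
          (fun k _ => hg_nonneg k) hptwise hsummable hgsummable
      _ = 1/4 := htsum_g
  norm_num at hfinal
end

section
/- For an n-dimensional lattice Λ ⊂ ℝⁿ, define μ̄(Λ)² = E_{x ← ℝⁿ/Λ}[dist(x,Λ)²] (the expectation over a uniform point of the torus). Then μ̄(Λ) ≤ μ(Λ) ≤ √8 · μ̄(Λ), where μ(Λ) is the covering radius. -/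
open MeasureTheory Real Matrix Set

/-- Euclidean norm on `Fin n → ℝ`. -/
noncomputable def enorm {n : ℕ} (x : Fin n → ℝ) : ℝ := Real.sqrt (∑ i, x i ^ 2)

/-- The lattice point of `Λ = B·ℤⁿ` corresponding to the integer vector `z`. -/
noncomputable def latPt {n : ℕ} (B : Matrix (Fin n) (Fin n) ℝ) (z : Fin n → ℤ) : Fin n → ℝ :=
  B.mulVec fun i => (z i : ℝ)

/-- Euclidean distance from `x` to the lattice `B·ℤⁿ`. -/
noncomputable def distLat {n : ℕ} (B : Matrix (Fin n) (Fin n) ℝ) (x : Fin n → ℝ) : ℝ :=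
  ⨅ z : Fin n → ℤ, enorm (x - latPt B z)

/-- The covering radius of the lattice `B·ℤⁿ`. -/
noncomputable def covRad {n : ℕ} (B : Matrix (Fin n) (Fin n) ℝ) : ℝ :=
  ⨆ x : Fin n → ℝ, distLat B x

/-- A fundamental domain of `B·ℤⁿ` (parametrizing the torus `ℝⁿ/Λ`). -/
noncomputable def fundDom {n : ℕ} (B : Matrix (Fin n) (Fin n) ℝ) : Set (Fin n → ℝ) :=
  B.mulVec '' (Set.univ.pi fun _ : Fin n => Set.Ico (0 : ℝ) 1)

/-- The average squared distance of a uniform torus point to the lattice: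
`μ̄(Λ)² = E_{x ← ℝⁿ/Λ}[dist(x,Λ)²]`. -/
noncomputable def muBarSq {n : ℕ} (B : Matrix (Fin n) (Fin n) ℝ) : ℝ :=
  (∫ x in fundDom B, distLat B x ^ 2) / |B.det|

section Aux
variable {n : ℕ} (B : Matrix (Fin n) (Fin n) ℝ)

lemma enorm_nonneg (x : Fin n → ℝ) : 0 ≤ _root_.enorm x := Real.sqrt_nonneg _

lemma enorm_eq (x : Fin n → ℝ) : _root_.enorm x = ‖(WithLp.equiv 2 (Fin n → ℝ)).symm x‖ := by
  rw [EuclideanSpace.norm_eq]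
  simp [_root_.enorm, sq_abs]

lemma enorm_add_le_aux (x y : Fin n → ℝ) : _root_.enorm (x + y) ≤ _root_.enorm x + _root_.enorm y := by
  simp only [enorm_eq]
  rw [show (WithLp.equiv 2 (Fin n → ℝ)).symm (x + y)
      = (WithLp.equiv 2 (Fin n → ℝ)).symm x + (WithLp.equiv 2 (Fin n → ℝ)).symm y from rfl]
  exact norm_add_le _ _

lemma enorm_le_sum_abs (x : Fin n → ℝ) : _root_.enorm x ≤ ∑ i, |x i| := by
  rw [_root_.enorm, show ∑ i, x i ^ 2 = ∑ i, |x i| ^ 2 by simp [sq_abs]]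
  calc Real.sqrt (∑ i, |x i| ^ 2) ≤ Real.sqrt ((∑ i, |x i|) ^ 2) := by
        apply Real.sqrt_le_sqrt
        exact Finset.sum_sq_le_sq_sum_of_nonneg (fun i _ => abs_nonneg _)
    _ = ∑ i, |x i| := Real.sqrt_sq (Finset.sum_nonneg fun i _ => abs_nonneg _)

lemma enorm_le_mul_norm (x : Fin n → ℝ) : _root_.enorm x ≤ Real.sqrt n * ‖x‖ := by
  rw [_root_.enorm, ← Real.sqrt_sq (norm_nonneg x), ← Real.sqrt_mul (Nat.cast_nonneg n)]
  apply Real.sqrt_le_sqrt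
  calc ∑ i, x i ^ 2 ≤ ∑ _i : Fin n, ‖x‖ ^ 2 := by
        apply Finset.sum_le_sum
        intro i _
        rw [← sq_abs, ← Real.norm_eq_abs]
        exact pow_le_pow_left₀ (norm_nonneg _) (norm_le_pi_norm x i) 2
    _ = n * ‖x‖ ^ 2 := by simp [Finset.sum_const, mul_comm]

lemma bddBelow_distLat (x : Fin n → ℝ) :
    BddBelow (Set.range fun z : Fin n → ℤ => _root_.enorm (x - latPt B z)) :=
  ⟨0, by rintro r ⟨z, rfl⟩; exact enorm_nonneg _⟩

lemma distLat_nonneg (x : Fin n → ℝ) : 0 ≤ distLat B x :=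
  le_ciInf fun z => enorm_nonneg _

lemma distLat_le (x : Fin n → ℝ) (z : Fin n → ℤ) : distLat B x ≤ _root_.enorm (x - latPt B z) :=
  ciInf_le (bddBelow_distLat B x) z

lemma latPt_add (z w : Fin n → ℤ) : latPt B (z + w) = latPt B z + latPt B w := by
  unfold latPt
  have h : (fun i => ((z + w) i : ℝ)) = (fun i => (z i : ℝ)) + fun i => (w i : ℝ) := by
    funext i; simp only [Pi.add_apply]; push_cast; ring
  rw [h, Matrix.mulVec_add]

lemma latPt_single (i : Fin n) : latPt B (Pi.single i 1) = B.mulVec (Pi.single i 1) := by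
  unfold latPt
  have h : (fun j => ((Pi.single i 1 : Fin n → ℤ) j : ℝ)) = (Pi.single i 1 : Fin n → ℝ) := by
    funext j
    rcases eq_or_ne j i with rfl | hj
    · simp
    · simp [Pi.single_apply, hj]
  rw [h]

lemma latPt_zero : latPt B 0 = 0 := by
  unfold latPt
  have h : (fun i => ((0 : Fin n → ℤ) i : ℝ)) = (0 : Fin n → ℝ) := by funext i; simp
  rw [h, Matrix.mulVec_zero]

lemma latPt_neg (w : Fin n → ℤ) : latPt B (-w) = -latPt B w := by
  have h := latPt_add B w (-w)
  rw [add_neg_cancel, latPt_zero] at h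
  exact eq_neg_of_add_eq_zero_right h.symm

lemma latPt_zsmul (c : ℤ) (z : Fin n → ℤ) : latPt B (c • z) = (c : ℝ) • latPt B z := by
  unfold latPt
  have h : (fun i => ((c • z) i : ℝ)) = (c : ℝ) • fun i => (z i : ℝ) := by
    funext i
    simp only [Pi.smul_apply, smul_eq_mul, zsmul_eq_mul]
    push_cast
    ring
  rw [h, Matrix.mulVec_smul]

/-- `distLat` is subadditive. -/
lemma distLat_add_le (a b : Fin n → ℝ) : distLat B (a + b) ≤ distLat B a + distLat B b := by
  rw [← sub_le_iff_le_add']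
  apply le_ciInf
  intro zb
  rw [sub_le_iff_le_add', ← sub_le_iff_le_add]
  apply le_ciInf
  intro za
  rw [sub_le_iff_le_add]
  calc distLat B (a + b) ≤ _root_.enorm (a + b - latPt B (za + zb)) := distLat_le B _ _
    _ = _root_.enorm ((a - latPt B za) + (b - latPt B zb)) := by rw [latPt_add]; ring_nf
    _ ≤ _ := enorm_add_le_aux _ _

lemma distLat_le_add_enorm (x y : Fin n → ℝ) : distLat B x ≤ distLat B y + _root_.enorm (x - y) := by
  rw [← sub_le_iff_le_add]
  apply le_ciInf
  intro z
  rw [sub_le_iff_le_add]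
  calc distLat B x ≤ _root_.enorm (x - latPt B z) := distLat_le B _ _
    _ = _root_.enorm ((y - latPt B z) + (x - y)) := by ring_nf
    _ ≤ _ := enorm_add_le_aux _ _

lemma lipschitz_distLat : LipschitzWith (Real.toNNReal (Real.sqrt n)) (distLat B) := by
  apply LipschitzWith.of_dist_le_mul
  intro x y
  rw [Real.dist_eq, Real.coe_toNNReal _ (Real.sqrt_nonneg _), abs_sub_le_iff]
  have h1 : _root_.enorm (x - y) ≤ Real.sqrt n * dist x y := by
    rw [dist_eq_norm]; exact enorm_le_mul_norm _
  have h2 : _root_.enorm (y - x) ≤ Real.sqrt n * dist x y := by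
    rw [dist_comm, dist_eq_norm]; exact enorm_le_mul_norm _
  exact ⟨by linarith [distLat_le_add_enorm B x y], by linarith [distLat_le_add_enorm B y x]⟩

lemma continuous_distLat : Continuous (distLat B) := (lipschitz_distLat B).continuous

lemma distLat_add_latPt (x : Fin n → ℝ) (w : Fin n → ℤ) :
    distLat B (x + latPt B w) = distLat B x := by
  have key : ∀ (y : Fin n → ℝ) (v : Fin n → ℤ), distLat B (y + latPt B v) ≤ distLat B y := by
    intro y v
    apply le_ciInf
    intro z
    calc distLat B (y + latPt B v) ≤ _root_.enorm (y + latPt B v - latPt B (z + v)) := distLat_le B _ _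
      _ = _root_.enorm (y - latPt B z) := by rw [latPt_add]; ring_nf
  refine le_antisymm (key x w) ?_
  have h := key (x + latPt B w) (-w)
  rwa [latPt_neg, add_neg_cancel_right] at h

lemma distLat_le_const (hB : IsUnit B.det) (x : Fin n → ℝ) :
    distLat B x ≤ ∑ i, ∑ j, |B i j| := by
  classical
  set y : Fin n → ℝ := B⁻¹.mulVec x with hy
  set z : Fin n → ℤ := fun i => ⌊y i⌋ with hz
  have hxz : x - latPt B z = B.mulVec (fun i => Int.fract (y i)) := by
    have hxy : B.mulVec y = x := by
      rw [hy, Matrix.mulVec_mulVec, Matrix.mul_nonsing_inv _ hB, Matrix.one_mulVec]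
    have : (fun i => Int.fract (y i)) = y - fun i => ((z i : ℝ)) := by
      funext i; rw [Int.fract]; rfl
    rw [this, Matrix.mulVec_sub, hxy]
    rfl
  calc distLat B x ≤ _root_.enorm (x - latPt B z) := distLat_le B x z
    _ ≤ ∑ i, |(x - latPt B z) i| := enorm_le_sum_abs _
    _ ≤ ∑ i, ∑ j, |B i j| := by
        apply Finset.sum_le_sum
        intro i _
        rw [hxz]
        calc |(B.mulVec fun i => Int.fract (y i)) i| = |∑ j, B i j * Int.fract (y j)| := by
              rfl
          _ ≤ ∑ j, |B i j * Int.fract (y j)| := Finset.abs_sum_le_sum_abs _ _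
          _ ≤ ∑ j, |B i j| := by
              apply Finset.sum_le_sum
              intro j _
              rw [abs_mul]
              calc |B i j| * |Int.fract (y j)| ≤ |B i j| * 1 := by
                    apply mul_le_mul_of_nonneg_left _ (abs_nonneg _)
                    rw [abs_of_nonneg (Int.fract_nonneg _)]
                    exact le_of_lt (Int.fract_lt_one _)
                _ = |B i j| := mul_one _

lemma bddAbove_distLat (hB : IsUnit B.det) : BddAbove (Set.range (distLat B)) :=
  ⟨∑ i, ∑ j, |B i j|, by rintro r ⟨x, rfl⟩; exact distLat_le_const B hB x⟩

lemma distLat_le_covRad (hB : IsUnit B.det) (x : Fin n → ℝ) : distLat B x ≤ covRad B :=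
  le_ciSup (bddAbove_distLat B hB) x

lemma covRad_nonneg (hB : IsUnit B.det) : 0 ≤ covRad B :=
  (distLat_nonneg B 0).trans (distLat_le_covRad B hB 0)

/-- The linear equivalence given by an invertible matrix. -/
noncomputable def latEquiv (hB : IsUnit B.det) : (Fin n → ℝ) ≃ₗ[ℝ] (Fin n → ℝ) :=
  Matrix.toLinearEquiv' B (B.invertibleOfIsUnitDet hB)

lemma latEquiv_apply (hB : IsUnit B.det) (v : Fin n → ℝ) : latEquiv B hB v = B.mulVec v := rfl

/-- The basis given by the columns of `B`. -/
noncomputable def latBasis (hB : IsUnit B.det) : Module.Basis (Fin n) ℝ (Fin n → ℝ) :=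
  (Pi.basisFun ℝ (Fin n)).map (latEquiv B hB)

lemma latBasis_apply (hB : IsUnit B.det) (i : Fin n) :
    latBasis B hB i = latPt B (Pi.single i 1) := by
  rw [latBasis, Module.Basis.map_apply, Pi.basisFun_apply, latPt_single]
  rfl

/-- The lattice as a ℤ-submodule. -/
noncomputable def latSpan (hB : IsUnit B.det) : Submodule ℤ (Fin n → ℝ) :=
  Submodule.span ℤ (Set.range (latBasis B hB))

lemma mem_latSpan_iff (hB : IsUnit B.det) (y : Fin n → ℝ) :
    y ∈ latSpan B hB ↔ ∃ z : Fin n → ℤ, y = latPt B z := by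
  constructor
  · intro hy
    induction hy using Submodule.span_induction with
    | mem x hx =>
        obtain ⟨i, rfl⟩ := hx
        exact ⟨Pi.single i 1, (latBasis_apply B hB i)⟩
    | zero => exact ⟨0, (latPt_zero B).symm⟩
    | add x y _ _ hx hy =>
        obtain ⟨zx, rfl⟩ := hx; obtain ⟨zy, rfl⟩ := hy
        exact ⟨zx + zy, (latPt_add B zx zy).symm⟩
    | smul c x _ hx =>
        obtain ⟨zx, rfl⟩ := hx
        refine ⟨c • zx, ?_⟩
        rw [latPt_zsmul]
        ext i
        simp [Pi.smul_apply, zsmul_eq_mul]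
  · rintro ⟨z, rfl⟩
    have hv : (fun i => (z i : ℝ)) = ∑ i, (z i : ℝ) • (Pi.single i 1 : Fin n → ℝ) := by
      funext j
      simp [Pi.single_apply]
    have : latPt B z = ∑ i, (z i : ℤ) • latBasis B hB i := by
      rw [latPt, hv, show ∀ v, B.mulVec v = B.mulVecLin v from fun _ => rfl, map_sum]
      refine Finset.sum_congr rfl fun i _ => ?_
      rw [_root_.map_smul, latBasis_apply B hB i, latPt_single, Int.cast_smul_eq_zsmul]
      rfl
    rw [this]
    exact Submodule.sum_mem _ fun i _ => Submodule.smul_mem _ _ (Submodule.subset_span ⟨i, rfl⟩)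

lemma fundDom_eq (hB : IsUnit B.det) :
    fundDom B = ZSpan.fundamentalDomain (latBasis B hB) := by
  ext m
  rw [ZSpan.mem_fundamentalDomain]
  simp only [latBasis, Module.Basis.map_repr, LinearEquiv.trans_apply]
  constructor
  · rintro ⟨v, hv, rfl⟩
    intro i
    rw [show (latEquiv B hB).symm (B.mulVec v) = v by
      exact (latEquiv B hB).symm_apply_apply v]
    rw [Pi.basisFun_repr]
    exact hv i (mem_univ i)
  · intro h
    refine ⟨(latEquiv B hB).symm m, fun i _ => ?_, ?_⟩
    · have := h i
      rwa [Pi.basisFun_repr] at this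
    · exact (latEquiv B hB).apply_symm_apply m

lemma volume_fundDom (hB : IsUnit B.det) :
    volume (fundDom B) = ENNReal.ofReal |B.det| := by
  have h1 : fundDom B = (Matrix.toLin' B : (Fin n → ℝ) →ₗ[ℝ] (Fin n → ℝ)) ''
      (Set.univ.pi fun _ : Fin n => Set.Ico (0 : ℝ) 1) := by
    unfold fundDom
    congr 1
  rw [h1, Measure.addHaar_image_linearMap, LinearMap.det_toLin']
  rw [show volume (Set.univ.pi fun _ : Fin n => Set.Ico (0 : ℝ) 1) = 1 by
    rw [volume_pi_pi]; simp [Real.volume_Ico]]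
  rw [mul_one]

/-- The lattice as an additive subgroup. -/
noncomputable abbrev latGp (hB : IsUnit B.det) : AddSubgroup (Fin n → ℝ) :=
  (latSpan B hB).toAddSubgroup

lemma isFundDom (hB : IsUnit B.det) :
    IsAddFundamentalDomain (latGp B hB) (fundDom B) volume := by
  rw [fundDom_eq B hB]
  exact ZSpan.isAddFundamentalDomain' (latBasis B hB) volume

lemma distLat_vadd (hB : IsUnit B.det) (g : latGp B hB) (y : Fin n → ℝ) :
    distLat B (g +ᵥ y) = distLat B y := by
  obtain ⟨z, hz⟩ := (mem_latSpan_iff B hB g).mp g.2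
  have : g +ᵥ y = y + latPt B z := by
    rw [← hz]
    show (g : Fin n → ℝ) + y = y + g
    exact add_comm _ _
  rw [this, distLat_add_latPt]

lemma isFundDom_sub (hB : IsUnit B.det) (x : Fin n → ℝ) :
    IsAddFundamentalDomain (latGp B hB) ((Equiv.subLeft x) '' (fundDom B)) volume := by
  refine (isFundDom B hB).image_of_equiv (Equiv.subLeft x)
    ?_ (Equiv.neg (latGp B hB)) ?_
  · have h : ((Equiv.subLeft x).symm : (Fin n → ℝ) → (Fin n → ℝ)) = fun y => x - y := by
      funext y
      show -y + x = x - y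
      abel
    rw [h]
    exact (Measure.measurePreserving_sub_left volume x).quasiMeasurePreserving
  · intro g y
    show x - ((Equiv.neg _ g : latGp B hB) +ᵥ y) = g +ᵥ (x - y)
    show x - ((-(g : Fin n → ℝ)) + y) = (g : Fin n → ℝ) + (x - y)
    abel

instance countable_latGp (hB : IsUnit B.det) : Countable (latGp B hB) := by
  have hsurj : Function.Surjective (fun z : Fin n → ℤ =>
      (⟨latPt B z, (mem_latSpan_iff B hB _).mpr ⟨z, rfl⟩⟩ : latGp B hB)) := by
    rintro ⟨y, hy⟩
    obtain ⟨z, rfl⟩ := (mem_latSpan_iff B hB y).mp hy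
    exact ⟨z, rfl⟩
  exact hsurj.countable

lemma subst_integral (hB : IsUnit B.det) (x : Fin n → ℝ) :
    ∫ y in fundDom B, distLat B (x - y) = ∫ y in fundDom B, distLat B y := by
  have h1 : ∫ y in (Equiv.subLeft x) '' (fundDom B), distLat B y
      = ∫ y in fundDom B, distLat B (x - y) := by
    have hemb : MeasurableEmbedding (fun y : Fin n → ℝ => x - y) :=
      (MeasurableEquiv.subLeft x).measurableEmbedding
    have := (Measure.measurePreserving_sub_left volume x).setIntegral_image_emb hemb
      (distLat B) (fundDom B)
    convert this using 2
    rfl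
  rw [← h1]
  exact (isFundDom_sub B hB x).setIntegral_eq (isFundDom B hB) (distLat_vadd B hB)

lemma measurableSet_fundDom (hB : IsUnit B.det) : MeasurableSet (fundDom B) := by
  have h : fundDom B = ((latEquiv B hB).symm : (Fin n → ℝ) → (Fin n → ℝ)) ⁻¹'
      (Set.univ.pi fun _ : Fin n => Set.Ico (0 : ℝ) 1) := by
    unfold fundDom
    ext m
    rw [Set.mem_preimage]
    constructor
    · rintro ⟨v, hv, rfl⟩
      rwa [show (latEquiv B hB).symm (B.mulVec v) = v from (latEquiv B hB).symm_apply_apply v]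
    · intro h
      exact ⟨(latEquiv B hB).symm m, h, (latEquiv B hB).apply_symm_apply m⟩
  rw [h]
  exact (MeasurableSet.univ_pi fun _ => measurableSet_Ico).preimage
    ((latEquiv B hB).symm : (Fin n → ℝ) →ₗ[ℝ] (Fin n → ℝ)).continuous_of_finiteDimensional.measurable

lemma integrableOn_fundDom (hB : IsUnit B.det) (g : (Fin n → ℝ) → ℝ) (hg : Continuous g)
    (C : ℝ) (hC : ∀ y, |g y| ≤ C) : IntegrableOn g (fundDom B) volume := by
  apply Measure.integrableOn_of_bounded (M := C)
  · rw [volume_fundDom B hB]; exact ENNReal.ofReal_ne_top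
  · exact hg.aestronglyMeasurable
  · exact ae_of_all _ fun y => (Real.norm_eq_abs _).le.trans_eq' rfl |>.trans (hC y)

end Aux

section Main
variable {n : ℕ} (B : Matrix (Fin n) (Fin n) ℝ)

lemma muBarSq_le (hB : IsUnit B.det) : muBarSq B ≤ covRad B ^ 2 := by
  have hdet : (0:ℝ) < |B.det| := abs_pos.mpr hB.ne_zero
  have hC0 : (0:ℝ) ≤ ∑ i, ∑ j, |B i j| :=
    Finset.sum_nonneg fun i _ => Finset.sum_nonneg fun j _ => abs_nonneg _
  have hIsq : IntegrableOn (fun y => distLat B y ^ 2) (fundDom B) volume := by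
    apply integrableOn_fundDom B hB _ ((continuous_distLat B).pow 2) ((∑ i, ∑ j, |B i j|) ^ 2)
    intro y
    rw [abs_of_nonneg (sq_nonneg _)]
    exact pow_le_pow_left₀ (distLat_nonneg B y) (distLat_le_const B hB y) 2
  have hconst : IntegrableOn (fun _ : Fin n → ℝ => covRad B ^ 2) (fundDom B) volume := by
    apply integrableOn_fundDom B hB _ continuous_const (covRad B ^ 2)
    intro y; rw [abs_of_nonneg (sq_nonneg _)]
  have hmono : (∫ y in fundDom B, distLat B y ^ 2) ≤ ∫ _y in fundDom B, covRad B ^ 2 := by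
    apply setIntegral_mono_on hIsq hconst (measurableSet_fundDom B hB)
    intro y _
    exact pow_le_pow_left₀ (distLat_nonneg B y) (distLat_le_covRad B hB y) 2
  have hconstval : (∫ _y in fundDom B, covRad B ^ 2) = |B.det| * covRad B ^ 2 := by
    rw [setIntegral_const, measureReal_def, volume_fundDom B hB, ENNReal.toReal_ofReal (abs_nonneg _), smul_eq_mul]
  rw [muBarSq, div_le_iff₀ hdet]
  rw [hconstval] at hmono
  linarith

lemma muBarSq_nonneg (hB : IsUnit B.det) : 0 ≤ muBarSq B := by
  have hdet : (0:ℝ) < |B.det| := abs_pos.mpr hB.ne_zero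
  apply div_nonneg _ hdet.le
  exact setIntegral_nonneg (measurableSet_fundDom B hB) fun y _ => sq_nonneg _

lemma distLat_le_two_sqrt (hB : IsUnit B.det) (x : Fin n → ℝ) :
    distLat B x ≤ 2 * Real.sqrt (muBarSq B) := by
  classical
  set d : ℝ := |B.det| with hd
  have hdet : (0:ℝ) < d := abs_pos.mpr hB.ne_zero
  set C : ℝ := ∑ i, ∑ j, |B i j| with hCdef
  have hC0 : (0:ℝ) ≤ C := Finset.sum_nonneg fun i _ => Finset.sum_nonneg fun j _ => abs_nonneg _
  have habs : ∀ y, |distLat B y| ≤ C := fun y => by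
    rw [abs_of_nonneg (distLat_nonneg B y)]; exact distLat_le_const B hB y
  have hf : IntegrableOn (distLat B) (fundDom B) volume :=
    integrableOn_fundDom B hB _ (continuous_distLat B) C habs
  have hf2 : IntegrableOn (fun y => distLat B y ^ 2) (fundDom B) volume := by
    apply integrableOn_fundDom B hB _ ((continuous_distLat B).pow 2) (C ^ 2)
    intro y
    rw [abs_of_nonneg (sq_nonneg _)]
    exact pow_le_pow_left₀ (distLat_nonneg B y) (distLat_le_const B hB y) 2
  have hg1 : IntegrableOn (fun y => distLat B (x - y)) (fundDom B) volume := by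
    apply integrableOn_fundDom B hB _ ((continuous_distLat B).comp (by continuity)) C
    intro y; exact habs _
  set J : ℝ := ∫ y in fundDom B, distLat B y with hJ
  set I : ℝ := ∫ y in fundDom B, distLat B y ^ 2 with hI
  have hJ0 : 0 ≤ J :=
    setIntegral_nonneg (measurableSet_fundDom B hB) fun y _ => distLat_nonneg B y
  have hvol : (volume (fundDom B)).toReal = d := by
    rw [volume_fundDom B hB, ENNReal.toReal_ofReal (abs_nonneg _)]
  -- step 1 : d * distLat B x ≤ 2 * J
  have step1 : d * distLat B x ≤ 2 * J := by
    have hpt : ∀ y ∈ fundDom B, distLat B x ≤ distLat B (x - y) + distLat B y := by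
      intro y _
      have := distLat_add_le B (x - y) y
      rwa [sub_add_cancel] at this
    have hint : (∫ _y in fundDom B, distLat B x) ≤
        ∫ y in fundDom B, (distLat B (x - y) + distLat B y) := by
      apply setIntegral_mono_on _ (hg1.add hf) (measurableSet_fundDom B hB) hpt
      apply integrableOn_fundDom B hB _ continuous_const (|distLat B x|) (fun _ => le_refl _)
    rw [setIntegral_const, measureReal_def, hvol, smul_eq_mul] at hint
    rw [integral_add hg1 hf, subst_integral B hB x, ← hJ] at hint
    linarith
  -- step 2 : J ^ 2 ≤ d * I  (Cauchy–Schwarz)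
  have step2 : J ^ 2 ≤ d * I := by
    set a : ℝ := J / d with ha
    have hptws : ∀ y : Fin n → ℝ, (distLat B y - a) ^ 2
        = distLat B y ^ 2 - (2 * a) * distLat B y + a ^ 2 := fun y => by ring
    have hnn : 0 ≤ ∫ y in fundDom B, (distLat B y - a) ^ 2 :=
      setIntegral_nonneg (measurableSet_fundDom B hB) fun y _ => sq_nonneg _
    have e3 : IntegrableOn (fun y => 2 * a * distLat B y) (fundDom B) volume := by
      exact hf.const_mul (2 * a)
    have e1 : IntegrableOn (fun y => distLat B y ^ 2 - 2 * a * distLat B y) (fundDom B) volume := by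
      exact hf2.sub e3
    have e2 : IntegrableOn (fun _y : Fin n → ℝ => a ^ 2) (fundDom B) volume := by
      apply integrableOn_fundDom B hB _ continuous_const (|a ^ 2|) (fun _ => le_refl _)
    have hval : (∫ y in fundDom B, (distLat B y - a) ^ 2)
        = I - (2 * a) * J + a ^ 2 * d := by
      rw [show (fun y => (distLat B y - a) ^ 2)
          = fun y => (distLat B y ^ 2 - 2 * a * distLat B y) + a ^ 2 from
        funext fun y => by ring]
      rw [integral_add e1 e2, integral_sub hf2 e3, MeasureTheory.integral_const_mul, setIntegral_const,
        measureReal_def, hvol, smul_eq_mul, ← hI, ← hJ]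
      ring
    rw [hval] at hnn
    have hd2 : a * d = J := by rw [ha, div_mul_cancel₀ _ hdet.ne']
    nlinarith [hnn, hdet, sq_nonneg a]
  -- combine
  have hle : distLat B x ≤ 2 * (J / d) := by
    rw [show 2 * (J / d) = (2 * J) / d by ring, le_div_iff₀ hdet, mul_comm]
    exact step1
  have hmu : muBarSq B = I / d := rfl
  have hsq : J / d ≤ Real.sqrt (muBarSq B) := by
    apply Real.le_sqrt_of_sq_le
    rw [hmu, div_pow, div_le_div_iff₀ (by positivity) hdet]
    nlinarith [step2, hdet, mul_nonneg (sub_nonneg.mpr step2) hdet.le]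
  linarith

/-- `μ̄(Λ) ≤ μ(Λ) ≤ √8 · μ̄(Λ)`. -/
theorem stmt15 {n : ℕ} (B : Matrix (Fin n) (Fin n) ℝ) (hB : IsUnit B.det) :
    Real.sqrt (muBarSq B) ≤ covRad B ∧
      covRad B ≤ Real.sqrt 8 * Real.sqrt (muBarSq B) := by
  constructor
  · calc Real.sqrt (muBarSq B) ≤ Real.sqrt (covRad B ^ 2) :=
        Real.sqrt_le_sqrt (muBarSq_le B hB)
      _ = covRad B := by rw [Real.sqrt_sq (covRad_nonneg B hB)]
  · have h2 : covRad B ≤ 2 * Real.sqrt (muBarSq B) :=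
      ciSup_le fun x => distLat_le_two_sqrt B hB x
    have h8 : (2:ℝ) ≤ Real.sqrt 8 := Real.le_sqrt_of_sq_le (by norm_num)
    calc covRad B ≤ 2 * Real.sqrt (muBarSq B) := h2
      _ ≤ Real.sqrt 8 * Real.sqrt (muBarSq B) :=
        mul_le_mul_of_nonneg_right h8 (Real.sqrt_nonneg _)

end Main
end
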